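/- arXiv:2004.07448 — 6 statements merged into one kernel-verified Lean document; each statement's English description precedes it below -/
import Mathlib

section
/- Let $d_1, d_2 > 0$ with $d_1 d_2 > 1$, let $x_1, x_2 \in (0,1]$ with $\lambda := x_1 + x_2 - 1 > 0$, and let $y_1, y_2 \ge 0$, $t \ge 0$. Then $t \ge \frac{(d_1d_2-1)(d_1 x_2 y_1^2 + d_2 x_1 y_2^2) + 2\lambda d_1 d_2 y_1 y_2 + \lambda(d_1 y_1^2 + d_2 y_2^2)}{(d_1d_2-1)x_1 x_2 - \lambda^2 + \lambda(x_1 + x_2)}$ holds if and only if the matrix $\begin{pmatrix} t/(d_1d_2-1) & y_1 & y_2 \\ y_1 & d_2 x_1 + x_2/d_1 - 1/d_1 & 1 - x_1 - x_2 \\ y_2 & 1 - x_1 - x_2 & x_1/d_2 + d_1 x_2 - 1/d_2 \end{pmatrix}$ is positive semidefinite. -/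
open Matrix

private lemma aux_nonneg {c s : ℝ} (hc : 0 < c) (h : 0 ≤ c * s) : 0 ≤ s := by
  nlinarith

set_option maxHeartbeats 1600000 in
theorem stmt_4 (d₁ d₂ x₁ x₂ y₁ y₂ t : ℝ)
    (hd₁ : 0 < d₁) (hd₂ : 0 < d₂) (hd : 1 < d₁ * d₂)
    (hx₁ : x₁ ∈ Set.Ioc (0:ℝ) 1) (hx₂ : x₂ ∈ Set.Ioc (0:ℝ) 1)
    (hlam : 0 < x₁ + x₂ - 1) (hy₁ : 0 ≤ y₁) (hy₂ : 0 ≤ y₂) (ht : 0 ≤ t) :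
    (((d₁ * d₂ - 1) * (d₁ * x₂ * y₁ ^ 2 + d₂ * x₁ * y₂ ^ 2)
        + 2 * (x₁ + x₂ - 1) * d₁ * d₂ * y₁ * y₂
        + (x₁ + x₂ - 1) * (d₁ * y₁ ^ 2 + d₂ * y₂ ^ 2)) /
      ((d₁ * d₂ - 1) * x₁ * x₂ - (x₁ + x₂ - 1) ^ 2 + (x₁ + x₂ - 1) * (x₁ + x₂)) ≤ t)
      ↔ (!![t / (d₁ * d₂ - 1), y₁, y₂;
            y₁, d₂ * x₁ + x₂ / d₁ - 1 / d₁, 1 - x₁ - x₂;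
            y₂, 1 - x₁ - x₂, x₁ / d₂ + d₁ * x₂ - 1 / d₂] : Matrix (Fin 3) (Fin 3) ℝ).PosSemidef := by
  obtain ⟨hx₁0, hx₁1⟩ := hx₁
  obtain ⟨hx₂0, hx₂1⟩ := hx₂
  have hD1 : 0 < d₁ * d₂ - 1 := by linarith
  have hD0 : 0 < d₁ * d₂ := by positivity
  set A := d₂ * x₁ + x₂ / d₁ - 1 / d₁ with hA
  set C := x₁ / d₂ + d₁ * x₂ - 1 / d₂ with hC
  set T := t / (d₁ * d₂ - 1) with hT
  have hAe : A * d₁ = d₁ * d₂ * x₁ + x₂ - 1 := by rw [hA]; field_simp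
  have hCe : C * d₂ = x₁ + d₁ * d₂ * x₂ - 1 := by rw [hC]; field_simp
  have hTe : T * (d₁ * d₂ - 1) = t := by rw [hT]; field_simp
  have hA0 : 0 < A := by nlinarith [hAe, mul_pos hD1 hx₁0]
  have hC0 : 0 < C := by nlinarith [hCe, mul_pos hD1 hx₂0]
  have hM : 0 < (d₁ * d₂ - 1) * x₁ * x₂ - (x₁ + x₂ - 1) ^ 2 + (x₁ + x₂ - 1) * (x₁ + x₂) := by
    nlinarith [mul_pos (mul_pos hD1 hx₁0) hx₂0]
  have hDetE : d₁ * d₂ * (A * C - (x₁ + x₂ - 1) ^ 2)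
      = (d₁ * d₂ - 1) * ((d₁ * d₂ - 1) * x₁ * x₂ + (x₁ + x₂ - 1)) := by
    rw [hA, hC]; field_simp; ring
  have hDet : 0 < A * C - (x₁ + x₂ - 1) ^ 2 := by
    have h7 : 0 < (d₁ * d₂ - 1) * ((d₁ * d₂ - 1) * x₁ * x₂ + (x₁ + x₂ - 1)) := by
      apply mul_pos hD1; nlinarith [mul_pos (mul_pos hD1 hx₁0) hx₂0]
    nlinarith [hDetE, h7, hD0]
  have hkey : d₁ * d₂ * (T * (A * C - (x₁ + x₂ - 1) ^ 2)
        - (C * y₁ ^ 2 + 2 * (x₁ + x₂ - 1) * y₁ * y₂ + A * y₂ ^ 2))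
      = t * ((d₁ * d₂ - 1) * x₁ * x₂ - (x₁ + x₂ - 1) ^ 2 + (x₁ + x₂ - 1) * (x₁ + x₂))
        - ((d₁ * d₂ - 1) * (d₁ * x₂ * y₁ ^ 2 + d₂ * x₁ * y₂ ^ 2)
            + 2 * (x₁ + x₂ - 1) * d₁ * d₂ * y₁ * y₂
            + (x₁ + x₂ - 1) * (d₁ * y₁ ^ 2 + d₂ * y₂ ^ 2)) := by
    rw [hA, hC, hT]; field_simp; ring
  have hqform : ∀ z : Fin 3 → ℝ,
      (star z) ⬝ᵥ ((!![T, y₁, y₂;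
            y₁, A, 1 - x₁ - x₂;
            y₂, 1 - x₁ - x₂, C] : Matrix (Fin 3) (Fin 3) ℝ) *ᵥ z)
      = T * (z 0) ^ 2 + 2 * y₁ * (z 0) * (z 1) + 2 * y₂ * (z 0) * (z 2)
        + A * (z 1) ^ 2 + 2 * (1 - x₁ - x₂) * (z 1) * (z 2) + C * (z 2) ^ 2 := by
    intro z
    simp [dotProduct, Matrix.mulVec, Fin.sum_univ_three, Matrix.vecHead, Matrix.vecTail]
    ring
  constructor
  · intro h
    have hN := (div_le_iff₀ hM).mp h
    have h8 : 0 ≤ d₁ * d₂ * (T * (A * C - (x₁ + x₂ - 1) ^ 2)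
        - (C * y₁ ^ 2 + 2 * (x₁ + x₂ - 1) * y₁ * y₂ + A * y₂ ^ 2)) := by
      rw [hkey]; linarith
    have hS := aux_nonneg hD0 h8
    refine Matrix.PosSemidef.of_dotProduct_mulVec_nonneg ?_ ?_
    · ext i j
      fin_cases i <;> fin_cases j <;> simp [Matrix.conjTranspose_apply]
    · intro z
      rw [hqform z]
      have hid : A * (A * C - (x₁ + x₂ - 1) ^ 2) *
            (T * (z 0) ^ 2 + 2 * y₁ * (z 0) * (z 1) + 2 * y₂ * (z 0) * (z 2)
              + A * (z 1) ^ 2 + 2 * (1 - x₁ - x₂) * (z 1) * (z 2) + C * (z 2) ^ 2)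
          = (A * C - (x₁ + x₂ - 1) ^ 2) * (A * (z 1) + y₁ * (z 0) - (x₁ + x₂ - 1) * (z 2)) ^ 2
            + ((A * C - (x₁ + x₂ - 1) ^ 2) * (z 2) + (A * y₂ + (x₁ + x₂ - 1) * y₁) * (z 0)) ^ 2
            + A * (T * (A * C - (x₁ + x₂ - 1) ^ 2)
                - (C * y₁ ^ 2 + 2 * (x₁ + x₂ - 1) * y₁ * y₂ + A * y₂ ^ 2)) * (z 0) ^ 2 := by
        ring
      refine aux_nonneg (mul_pos hA0 hDet) ?_
      rw [hid]
      have p1 : 0 ≤ (A * C - (x₁ + x₂ - 1) ^ 2) *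
          (A * (z 1) + y₁ * (z 0) - (x₁ + x₂ - 1) * (z 2)) ^ 2 :=
        mul_nonneg hDet.le (sq_nonneg _)
      have p2 : 0 ≤ ((A * C - (x₁ + x₂ - 1) ^ 2) * (z 2)
          + (A * y₂ + (x₁ + x₂ - 1) * y₁) * (z 0)) ^ 2 := sq_nonneg _
      have p3 : 0 ≤ A * (T * (A * C - (x₁ + x₂ - 1) ^ 2)
          - (C * y₁ ^ 2 + 2 * (x₁ + x₂ - 1) * y₁ * y₂ + A * y₂ ^ 2)) * (z 0) ^ 2 :=
        mul_nonneg (mul_nonneg hA0.le hS) (sq_nonneg _)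
      linarith
  · intro h
    have h9 := h.dotProduct_mulVec_nonneg ![A * C - (x₁ + x₂ - 1) ^ 2,
        -(C * y₁ + (x₁ + x₂ - 1) * y₂), -((x₁ + x₂ - 1) * y₁ + A * y₂)]
    rw [hqform] at h9
    simp only [Matrix.cons_val_zero, Matrix.cons_val_one, Matrix.head_cons,
      Matrix.cons_val_two, Matrix.tail_cons] at h9
    have h9' : 0 ≤ (A * C - (x₁ + x₂ - 1) ^ 2) * (T * (A * C - (x₁ + x₂ - 1) ^ 2)
        - (C * y₁ ^ 2 + 2 * (x₁ + x₂ - 1) * y₁ * y₂ + A * y₂ ^ 2)) := by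
      linarith [h9]
    have h10 := aux_nonneg hDet h9'
    rw [div_le_iff₀ hM]
    linarith [hkey, mul_nonneg hD0.le h10]
end

section
/- Let $d_1, d_2 \ge 0$ with $d_1 d_2 \ge 1$, $x_1, x_2 \in (0,1]$, $y_1, y_2 > 0$, and $0 \le \lambda \le \min\{x_1, x_2\}$. If $\lambda \le (x_1 y_2 - d_1 x_2 y_1)/y_2$, then $\lambda \ge (x_2 y_1 - d_2 x_1 y_2)/y_1$. -/
theorem stmt_6 (d₁ d₂ x₁ x₂ y₁ y₂ lam : ℝ)
    (hd₁ : 0 ≤ d₁) (hd₂ : 0 ≤ d₂) (hd : 1 ≤ d₁ * d₂)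
    (hx₁ : x₁ ∈ Set.Ioc (0:ℝ) 1) (hx₂ : x₂ ∈ Set.Ioc (0:ℝ) 1)
    (hy₁ : 0 < y₁) (hy₂ : 0 < y₂)
    (hlam0 : 0 ≤ lam) (hlam : lam ≤ min x₁ x₂)
    (h : lam ≤ (x₁ * y₂ - d₁ * x₂ * y₁) / y₂) :
    (x₂ * y₁ - d₂ * x₁ * y₂) / y₁ ≤ lam := by
  obtain ⟨hx₁0, hx₁1⟩ := hx₁
  obtain ⟨hx₂0, hx₂1⟩ := hx₂
  rw [div_le_iff₀ hy₁]
  rw [le_div_iff₀ hy₂] at h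
  nlinarith [mul_pos hx₂0 hy₁, mul_nonneg hd₂ (mul_nonneg hx₁0.le hy₂.le),
    mul_le_mul_of_nonneg_left h hd₂, mul_nonneg hlam0 hy₂.le]
end

section
/- Let $x_1, x_2, y_1, y_2 \in \mathbb{R}$, $Y$ a symmetric $2\times2$ matrix, and $W$ a symmetric $3\times 3$ PSD matrix satisfying: $W_{12} = Y_{12}$; $(Y_{11} - W_{11})(x_1 - W_{33}) \ge (y_1 - W_{31})^2$ with $W_{11} \le Y_{11}$, $W_{33} \le x_1$; $(Y_{22} - W_{22})(x_2 - W_{33}) \ge (y_2 - W_{32})^2$ with $W_{22} \le Y_{22}$, $W_{33} \le x_2$; and $W_{33} \ge 0$. Then the matrix $\begin{pmatrix} Y_{11} & Y_{12} & y_1 \\ Y_{12} & Y_{22} & y_2 \\ y_1 & y_2 & x_1 + x_2 \end{pmatrix}$ is positive semidefinite. -/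
open Matrix

lemma quad_aux (A B C a c : ℝ) (hA : 0 ≤ A) (hC : 0 ≤ C) (h : B ^ 2 ≤ A * C) :
    0 ≤ A * a ^ 2 + 2 * B * a * c + C * c ^ 2 := by
  rcases eq_or_lt_of_le hA with hA0 | hA0
  · have hB : B = 0 := by nlinarith [sq_nonneg B]
    subst hB
    have hA' : A = 0 := hA0.symm
    subst hA'
    have := mul_nonneg hC (sq_nonneg c)
    nlinarith
  · nlinarith [sq_nonneg (A * a + B * c), mul_pos hA0 hA0]

theorem stmt_9 (x₁ x₂ y₁ y₂ : ℝ) (Y : Matrix (Fin 2) (Fin 2) ℝ) (hY : Y.IsSymm)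
    (W : Matrix (Fin 3) (Fin 3) ℝ) (hWsymm : W.IsSymm) (hWpsd : W.PosSemidef)
    (h12 : W 0 1 = Y 0 1)
    (h1 : (Y 0 0 - W 0 0) * (x₁ - W 2 2) ≥ (y₁ - W 2 0) ^ 2)
    (h11 : W 0 0 ≤ Y 0 0) (h33a : W 2 2 ≤ x₁)
    (h2 : (Y 1 1 - W 1 1) * (x₂ - W 2 2) ≥ (y₂ - W 2 1) ^ 2)
    (h22 : W 1 1 ≤ Y 1 1) (h33b : W 2 2 ≤ x₂)
    (h33 : 0 ≤ W 2 2) :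
    (!![Y 0 0, Y 0 1, y₁;
        Y 0 1, Y 1 1, y₂;
        y₁, y₂, x₁ + x₂] : Matrix (Fin 3) (Fin 3) ℝ).PosSemidef := by
  rw [Matrix.posSemidef_iff_dotProduct_mulVec]
  constructor
  · ext i j
    fin_cases i <;> fin_cases j <;>
      simp [Matrix.conjTranspose_apply]
  · intro v
    have hW := hWpsd.dotProduct_mulVec_nonneg v
    have e02 : W 0 2 = W 2 0 := (hWsymm.apply 0 2).symm
    have e12 : W 1 2 = W 2 1 := (hWsymm.apply 1 2).symm
    have e10 : W 1 0 = W 0 1 := (hWsymm.apply 1 0).symm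
    set a := v 0
    set b := v 1
    set c := v 2
    simp [dotProduct, mulVec, Fin.sum_univ_three] at hW ⊢
    have q1 : 0 ≤ (Y 0 0 - W 0 0) * a ^ 2 + 2 * (y₁ - W 2 0) * a * c +
        (x₁ - W 2 2) * c ^ 2 :=
      quad_aux _ _ _ _ _ (by linarith) (by linarith) h1
    have q2 : 0 ≤ (Y 1 1 - W 1 1) * b ^ 2 + 2 * (y₂ - W 2 1) * b * c +
        (x₂ - W 2 2) * c ^ 2 :=
      quad_aux _ _ _ _ _ (by linarith) (by linarith) h2
    have q3 : 0 ≤ W 2 2 * c ^ 2 := by positivity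
    rw [e02, e12, e10, h12] at hW
    nlinarith [hW, q1, q2, q3]
end

section
/- Let $x \in \{0,1\}^2$ and $y \in \mathbb{R}_+^2$ with $y_i(1 - x_i) = 0$ for $i=1,2$, and let $Y = yy'$. Then there exists a symmetric PSD $3 \times 3$ matrix $W$ with $W_{12} = Y_{12}$, $(Y_{11}-W_{11})(x_1-W_{33}) \ge (y_1-W_{31})^2$, $W_{11} \le Y_{11}$, $W_{33} \le x_1$, $(Y_{22}-W_{22})(x_2-W_{33}) \ge (y_2-W_{32})^2$, $W_{22} \le Y_{22}$, $W_{33} \le x_2$, $0 \le W_{31} \le y_1$, $0 \le W_{32} \le y_2$, and $W_{33} \ge x_1 + x_2 - 1$. -/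
open Matrix

theorem stmt_10 (x₁ x₂ y₁ y₂ : ℝ)
    (hx₁ : x₁ = 0 ∨ x₁ = 1) (hx₂ : x₂ = 0 ∨ x₂ = 1)
    (hy₁ : 0 ≤ y₁) (hy₂ : 0 ≤ y₂)
    (hc₁ : y₁ * (1 - x₁) = 0) (hc₂ : y₂ * (1 - x₂) = 0) :
    ∃ W : Matrix (Fin 3) (Fin 3) ℝ, W.PosSemidef ∧
      W 0 1 = y₁ * y₂ ∧
      (y₁ * y₁ - W 0 0) * (x₁ - W 2 2) ≥ (y₁ - W 2 0) ^ 2 ∧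
      W 0 0 ≤ y₁ * y₁ ∧ W 2 2 ≤ x₁ ∧
      (y₂ * y₂ - W 1 1) * (x₂ - W 2 2) ≥ (y₂ - W 2 1) ^ 2 ∧
      W 1 1 ≤ y₂ * y₂ ∧ W 2 2 ≤ x₂ ∧
      0 ≤ W 2 0 ∧ W 2 0 ≤ y₁ ∧ 0 ≤ W 2 1 ∧ W 2 1 ≤ y₂ ∧
      x₁ + x₂ - 1 ≤ W 2 2 := by
  rcases hx₁ with h1 | h1
  · -- x₁ = 0 so y₁ = 0
    have hy1 : y₁ = 0 := by simpa [h1] using hc₁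
    refine ⟨0, PosSemidef.zero, ?_⟩
    rcases hx₂ with h2 | h2
    · have hy2 : y₂ = 0 := by simpa [h2] using hc₂
      simp [hy1, hy2, h1, h2]
    · simp only [Matrix.zero_apply]
      refine ⟨by simp [hy1], by nlinarith, by nlinarith, le_of_eq h1.symm,
        by nlinarith, by nlinarith, by rw [h2]; norm_num, le_refl 0, le_of_eq hy1.symm,
        le_refl 0, hy₂, by rw [h1, h2]; norm_num⟩
  · rcases hx₂ with h2 | h2
    · have hy2 : y₂ = 0 := by simpa [h2] using hc₂
      refine ⟨0, PosSemidef.zero, ?_⟩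
      simp only [Matrix.zero_apply]
      refine ⟨by simp [hy2], by nlinarith, by nlinarith, by rw [h1]; norm_num,
        by nlinarith, by nlinarith, le_of_eq h2.symm, le_refl 0, hy₁,
        le_refl 0, le_of_eq hy2.symm, by rw [h1, h2]; norm_num⟩
    · -- both = 1, take W = v vᵀ with v = (y₁, y₂, 1)
      set v : Fin 3 → ℝ := ![y₁, y₂, 1] with hv
      refine ⟨Matrix.replicateCol (Fin 1) v * (Matrix.replicateCol (Fin 1) v)ᴴ, posSemidef_self_mul_conjTranspose _, ?_⟩
      have hW : ∀ i j, (Matrix.replicateCol (Fin 1) v * (Matrix.replicateCol (Fin 1) v)ᴴ) i j = v i * v j := by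
        intro i j
        simp [Matrix.mul_apply, Matrix.replicateCol_apply, Matrix.conjTranspose_apply]
      simp only [hW]
      simp only [hv]
      norm_num [h1, h2, Matrix.cons_val_zero, Matrix.cons_val_one, Matrix.cons_val_two]
      exact ⟨hy₁, hy₂⟩
end

section
/- Let $d_1, d_2 \ge 0$ with $d_1 d_2 \ge 1$, let $x \in \{0,1\}^2$, $y \in \mathbb{R}_+^2$ with $y_i(1-x_i) = 0$ for $i=1,2$, and $t \ge d_1 y_1^2 + 2y_1y_2 + d_2 y_2^2$. Then there exist $\lambda \in \mathbb{R}_+$ and $z \in \mathbb{R}_+^2$ with $x_1 + x_2 - 1 \le \lambda \le \min\{x_1, x_2\}$ and $t \ge \frac{d_1(y_1 - z_1)^2}{x_1 - \lambda} + \frac{d_2(y_2 - z_2)^2}{x_2 - \lambda} + \frac{d_1 z_1^2 + 2z_1z_2 + d_2 z_2^2}{\lambda}$. -/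
theorem stmt_15 (d₁ d₂ x₁ x₂ y₁ y₂ t : ℝ)
    (hd₁ : 0 ≤ d₁) (hd₂ : 0 ≤ d₂) (hd : 1 ≤ d₁ * d₂)
    (hx₁ : x₁ = 0 ∨ x₁ = 1) (hx₂ : x₂ = 0 ∨ x₂ = 1)
    (hy₁ : 0 ≤ y₁) (hy₂ : 0 ≤ y₂)
    (hc₁ : y₁ * (1 - x₁) = 0) (hc₂ : y₂ * (1 - x₂) = 0)
    (ht : d₁ * y₁ ^ 2 + 2 * y₁ * y₂ + d₂ * y₂ ^ 2 ≤ t) :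
    ∃ lam z₁ z₂ : ℝ, 0 ≤ lam ∧ 0 ≤ z₁ ∧ 0 ≤ z₂ ∧
      x₁ + x₂ - 1 ≤ lam ∧ lam ≤ min x₁ x₂ ∧
      d₁ * (y₁ - z₁) ^ 2 / (x₁ - lam) + d₂ * (y₂ - z₂) ^ 2 / (x₂ - lam)
        + (d₁ * z₁ ^ 2 + 2 * z₁ * z₂ + d₂ * z₂ ^ 2) / lam ≤ t := by
  rcases hx₁ with h1 | h1 <;> rcases hx₂ with h2 | h2 <;> subst h1 h2
  · have e1 : y₁ = 0 := by linarith [hc₁]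
    have e2 : y₂ = 0 := by linarith [hc₂]
    exact ⟨0, 0, 0, le_refl _, le_refl _, le_refl _, by norm_num, by norm_num,
      by simp; nlinarith⟩
  · have e1 : y₁ = 0 := by linarith [hc₁]
    exact ⟨0, 0, 0, le_refl _, le_refl _, le_refl _, by norm_num, by norm_num,
      by simp [e1]; nlinarith⟩
  · have e2 : y₂ = 0 := by linarith [hc₂]
    exact ⟨0, 0, 0, le_refl _, le_refl _, le_refl _, by norm_num, by norm_num,
      by simp [e2]; nlinarith⟩
  · exact ⟨1, y₁, y₂, by norm_num, hy₁, hy₂, by norm_num, by norm_num,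
      by simp; nlinarith⟩
end

section
/- Suppose the $5 \times 5$ symmetric matrix $M = \begin{pmatrix} Y_{11} & Y_{12} & W_{31} & y_1 - W_{31} & 0 \\ Y_{12} & Y_{22} & W_{32} & 0 & y_2 - W_{32} \\ W_{31} & W_{32} & W_{33} & 0 & 0 \\ y_1 - W_{31} & 0 & 0 & x_1 - W_{33} & 0 \\ 0 & y_2 - W_{32} & 0 & 0 & x_2 - W_{33} \end{pmatrix}$ is positive semidefinite. Then $\begin{pmatrix} Y_{11} & Y_{12} & y_1 \\ Y_{12} & Y_{22} & y_2 \\ y_1 & y_2 & x_1 + x_2 - W_{33} \end{pmatrix}$ is positive semidefinite. -/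
open Matrix

theorem stmt_19 (Y₁₁ Y₁₂ Y₂₂ y₁ y₂ x₁ x₂ W₃₁ W₃₂ W₃₃ : ℝ)
    (hM : (!![Y₁₁, Y₁₂, W₃₁, y₁ - W₃₁, 0;
              Y₁₂, Y₂₂, W₃₂, 0, y₂ - W₃₂;
              W₃₁, W₃₂, W₃₃, 0, 0;
              y₁ - W₃₁, 0, 0, x₁ - W₃₃, 0;
              0, y₂ - W₃₂, 0, 0, x₂ - W₃₃] : Matrix (Fin 5) (Fin 5) ℝ).PosSemidef) :
    (!![Y₁₁, Y₁₂, y₁;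
        Y₁₂, Y₂₂, y₂;
        y₁, y₂, x₁ + x₂ - W₃₃] : Matrix (Fin 3) (Fin 3) ℝ).PosSemidef := by
  refine Matrix.PosSemidef.of_dotProduct_mulVec_nonneg ?_ ?_
  · ext i j
    fin_cases i <;> fin_cases j <;> simp [Matrix.conjTranspose_apply]
  · intro v
    have h := hM.dotProduct_mulVec_nonneg ![v 0, v 1, v 2, v 2, v 2]
    simp [dotProduct, Matrix.mulVec, Fin.sum_univ_five, Fin.sum_univ_three,
      Fin.isValue, show (2:Fin 5) = ⟨2,by norm_num⟩ from rfl,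
      show (3:Fin 5) = ⟨3,by norm_num⟩ from rfl, show (4:Fin 5) = ⟨4,by norm_num⟩ from rfl,
      show (2:Fin 3) = ⟨2,by norm_num⟩ from rfl, Matrix.cons_val_succ, Matrix.vecHead, Matrix.vecTail] at h ⊢
    nlinarith [h]
end
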